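/- Let (Ω, ℱ, P) be a probability space, let L and K be positive integers, let G : Ω → Fin L and H : Ω → Fin K be measurable, and let Y ∈ L²(P). For each cell (ℓ, k) set π ℓ k = P(G = ℓ, H = k), assume π ℓ k > 0 for all (ℓ, k), and let μ ℓ k = E[Y · 1{G = ℓ, H = k}] / π ℓ k be the cell mean, με = E[Y] the grand mean, and ξ = Y − μ_{G,H} the within-cell residual (with μ_{G,H}(ω) = μ (G ω) (H ω)). Let α : Fin L → ℝ, ψ : Fin K → ℝ, and κ ℓ k = μ ℓ k − με − α ℓ − ψ k satisfy the orthogonality relations Σ_{ℓ,k} π ℓ k · α ℓ · κ ℓ k = 0 and Σ_{ℓ,k} π ℓ k · ψ k · κ ℓ k = 0. Then the variance of Y decomposes exactly as: Var(Y) = Σ_ℓ (Σ_k π ℓ k) · (α ℓ)² + Σ_k (Σ_ℓ π ℓ k) · (ψ k)² + 2 Σ_{ℓ,k} π ℓ k · α ℓ · ψ k + Σ_{ℓ,k} π ℓ k · (κ ℓ k)² + E[ξ²]. -/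

import Mathlib

open MeasureTheory Finset

/-- **TWICE variance decomposition.** The variance of `Y` splits exactly into worker,
firm, sorting, interaction, and within-cell residual components, given the orthogonality
of the interaction term with the projected worker and firm effects. -/
theorem twice_variance_decomposition
    {Ω : Type*} [MeasurableSpace Ω] (P : Measure Ω) [IsProbabilityMeasure P]
    {L K : ℕ} (hL : 0 < L) (hK : 0 < K)
    (G : Ω → Fin L) (H : Ω → Fin K) (hG : Measurable G) (hH : Measurable H)
    (Y : Ω → ℝ) (hY : MemLp Y 2 P)
    (π : Fin L → Fin K → ℝ)
    (hπdef : ∀ ℓ k, π ℓ k = (P {ω | G ω = ℓ ∧ H ω = k}).toReal)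
    (hπpos : ∀ ℓ k, 0 < π ℓ k)
    (μ : Fin L → Fin K → ℝ)
    (hμdef : ∀ ℓ k, μ ℓ k = (∫ ω in {ω | G ω = ℓ ∧ H ω = k}, Y ω ∂P) / π ℓ k)
    (με : ℝ) (hμε : με = ∫ ω, Y ω ∂P)
    (ξ : Ω → ℝ) (hξ : ∀ ω, ξ ω = Y ω - μ (G ω) (H ω))
    (α : Fin L → ℝ) (ψ : Fin K → ℝ)
    (κ : Fin L → Fin K → ℝ)
    (hκ : ∀ ℓ k, κ ℓ k = μ ℓ k - με - α ℓ - ψ k)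
    (horthα : ∑ ℓ, ∑ k, π ℓ k * α ℓ * κ ℓ k = 0)
    (horthψ : ∑ ℓ, ∑ k, π ℓ k * ψ k * κ ℓ k = 0) :
    ProbabilityTheory.variance Y P
      = (∑ ℓ, (∑ k, π ℓ k) * (α ℓ) ^ 2)
        + (∑ k, (∑ ℓ, π ℓ k) * (ψ k) ^ 2)
        + 2 * (∑ ℓ, ∑ k, π ℓ k * α ℓ * ψ k)
        + (∑ ℓ, ∑ k, π ℓ k * (κ ℓ k) ^ 2)
        + ∫ ω, (ξ ω) ^ 2 ∂P := by
  classical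
  set A : Fin L → Fin K → Set Ω := fun ℓ k => {ω | G ω = ℓ ∧ H ω = k} with hA
  have hAmeas : ∀ ℓ k, MeasurableSet (A ℓ k) := fun ℓ k =>
    ((hG (MeasurableSet.singleton ℓ)).inter (hH (MeasurableSet.singleton k)))
  set f : Ω → ℝ := fun ω => μ (G ω) (H ω) with hf
  have hf_meas : Measurable f :=
    (measurable_of_countable (fun p : Fin L × Fin K => μ p.1 p.2)).comp (hG.prodMk hH)
  -- boundedness of f
  set C : ℝ := ∑ ℓ, ∑ k, |μ ℓ k| with hC
  have hf_bdd : ∀ ω, ‖f ω‖ ≤ C := by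
    intro ω
    have h1 : |μ (G ω) (H ω)| ≤ ∑ k, |μ (G ω) k| :=
      Finset.single_le_sum (f := fun k => |μ (G ω) k|) (fun k _ => abs_nonneg _) (mem_univ _)
    have h2 : (∑ k, |μ (G ω) k|) ≤ C :=
      Finset.single_le_sum (f := fun ℓ => ∑ k, |μ ℓ k|)
        (fun ℓ _ => Finset.sum_nonneg fun k _ => abs_nonneg _) (mem_univ _)
    simpa [hf, Real.norm_eq_abs] using h1.trans h2
  have hf_mem : MemLp f 2 P :=
    MemLp.of_bound hf_meas.aestronglyMeasurable C (ae_of_all _ hf_bdd)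
  have hξ_eq : ξ = Y - f := funext fun ω => by simp [hξ ω, hf]
  have hξ_mem : MemLp ξ 2 P := hξ_eq ▸ hY.sub hf_mem
  have hYint : Integrable Y P := hY.integrable one_le_two
  have hξint : Integrable ξ P := hξ_mem.integrable one_le_two
  -- partition sum lemma
  have hsum : ∀ g : Ω → ℝ, Integrable g P →
      ∫ ω, g ω ∂P = ∑ ℓ, ∑ k, ∫ ω in A ℓ k, g ω ∂P := by
    intro g hg
    have hpt : ∀ ω, g ω = ∑ ℓ, ∑ k, Set.indicator (A ℓ k) g ω := by
      intro ω
      have : ∀ ℓ k, Set.indicator (A ℓ k) g ω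
          = if G ω = ℓ then (if H ω = k then g ω else 0) else 0 := by
        intro ℓ k
        by_cases h1 : G ω = ℓ <;> by_cases h2 : H ω = k <;>
          simp [Set.indicator, hA, Set.mem_setOf_eq, h1, h2]
      simp only [this]
      simp
    calc ∫ ω, g ω ∂P = ∫ ω, ∑ ℓ, ∑ k, Set.indicator (A ℓ k) g ω ∂P := by
          exact integral_congr_ae (ae_of_all _ hpt)
      _ = ∑ ℓ, ∑ k, ∫ ω, Set.indicator (A ℓ k) g ω ∂P := by
          rw [integral_finset_sum]
          · exact Finset.sum_congr rfl fun ℓ _ => by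
              rw [integral_finset_sum]
              intro k _; exact hg.indicator (hAmeas ℓ k)
          · intro ℓ _
            exact integrable_finset_sum _ fun k _ => hg.indicator (hAmeas ℓ k)
      _ = ∑ ℓ, ∑ k, ∫ ω in A ℓ k, g ω ∂P := by
          refine Finset.sum_congr rfl fun ℓ _ => Finset.sum_congr rfl fun k _ => ?_
          exact integral_indicator (hAmeas ℓ k)
  -- cell facts
  have hYA : ∀ ℓ k, ∫ ω in A ℓ k, Y ω ∂P = μ ℓ k * π ℓ k := by
    intro ℓ k
    rw [hμdef ℓ k]
    field_simp [(hπpos ℓ k).ne']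
    rfl
  have hξA : ∀ ℓ k, ∫ ω in A ℓ k, ξ ω ∂P = 0 := by
    intro ℓ k
    have : ∫ ω in A ℓ k, ξ ω ∂P = ∫ ω in A ℓ k, (Y ω - μ ℓ k) ∂P := by
      refine setIntegral_congr_fun (hAmeas ℓ k) fun ω hω => ?_
      obtain ⟨h1, h2⟩ := hω
      simp [hξ ω, h1, h2]
    rw [this, integral_sub (hYint.integrableOn) (integrableOn_const (measure_ne_top _ _)),
      hYA ℓ k, setIntegral_const]
    have : P.real (A ℓ k) = π ℓ k := (hπdef ℓ k).symm
    rw [this, smul_eq_mul]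
    ring
  -- cross term is zero
  have hfμ_int : Integrable (fun ω => (f ω - με) * ξ ω) P := by
    refine Integrable.bdd_mul (c := C + |με|) hξint ((hf_meas.sub measurable_const).aestronglyMeasurable) ?_
    exact ae_of_all _ fun ω => (norm_sub_le _ _).trans (by
      have := hf_bdd ω; simp only [Real.norm_eq_abs] at *; linarith)
  have hcross : ∫ ω, (f ω - με) * ξ ω ∂P = 0 := by
    rw [hsum _ hfμ_int]
    refine Finset.sum_eq_zero fun ℓ _ => Finset.sum_eq_zero fun k _ => ?_
    have h1 : ∫ ω in A ℓ k, (f ω - με) * ξ ω ∂P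
        = ∫ ω in A ℓ k, (μ ℓ k - με) * ξ ω ∂P := by
      refine setIntegral_congr_fun (hAmeas ℓ k) fun ω hω => ?_
      obtain ⟨hg1, hg2⟩ := hω
      simp [hf, hg1, hg2]
    rw [h1, integral_const_mul, hξA ℓ k, mul_zero]
  -- square of projection part
  have hfsq_int : Integrable (fun ω => (f ω - με) ^ 2) P :=
    (hf_mem.sub (memLp_const με)).integrable_sq
  have hfsq : ∫ ω, (f ω - με) ^ 2 ∂P = ∑ ℓ, ∑ k, π ℓ k * (μ ℓ k - με) ^ 2 := by
    rw [hsum _ hfsq_int]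
    refine Finset.sum_congr rfl fun ℓ _ => Finset.sum_congr rfl fun k _ => ?_
    have h1 : ∫ ω in A ℓ k, (f ω - με) ^ 2 ∂P
        = ∫ ω in A ℓ k, ((μ ℓ k - με) ^ 2 : ℝ) ∂P := by
      refine setIntegral_congr_fun (hAmeas ℓ k) fun ω hω => ?_
      obtain ⟨hg1, hg2⟩ := hω
      simp [hf, hg1, hg2]
    rw [h1, setIntegral_const, Measure.real, ← hπdef ℓ k, smul_eq_mul]
  -- ξ² integrable
  have hξsq_int : Integrable (fun ω => ξ ω ^ 2) P := hξ_mem.integrable_sq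
  -- variance formula
  have hvar : ProbabilityTheory.variance Y P = ∫ ω, (Y ω - με) ^ 2 ∂P := by
    rw [ProbabilityTheory.variance_eq_integral hY.1.aemeasurable]
    rw [hμε]
  have hsplit : ∫ ω, (Y ω - με) ^ 2 ∂P
      = (∫ ω, (f ω - με) ^ 2 ∂P) + (∫ ω, 2 * ((f ω - με) * ξ ω) ∂P)
        + ∫ ω, ξ ω ^ 2 ∂P := by
    have h : ∫ ω, (Y ω - με) ^ 2 ∂P
        = ∫ ω, ((f ω - με) ^ 2 + 2 * ((f ω - με) * ξ ω) + ξ ω ^ 2) ∂P := by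
      refine integral_congr_ae (ae_of_all _ fun ω => ?_)
      have hy : Y ω = f ω + ξ ω := by simp [hξ ω, hf]
      simp only [hy]; ring
    have h1 : Integrable (fun ω => (f ω - με) ^ 2 + 2 * ((f ω - με) * ξ ω)) P := by
      exact hfsq_int.add (hfμ_int.const_mul 2)
    rw [h, integral_add h1 hξsq_int, integral_add hfsq_int (hfμ_int.const_mul 2)]
  -- algebraic expansion of the projection variance
  have hexp : ∑ ℓ, ∑ k, π ℓ k * (μ ℓ k - με) ^ 2
      = (∑ ℓ, (∑ k, π ℓ k) * (α ℓ) ^ 2)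
        + (∑ k, (∑ ℓ, π ℓ k) * (ψ k) ^ 2)
        + 2 * (∑ ℓ, ∑ k, π ℓ k * α ℓ * ψ k)
        + (∑ ℓ, ∑ k, π ℓ k * (κ ℓ k) ^ 2) := by
    have hterm : ∀ ℓ k, π ℓ k * (μ ℓ k - με) ^ 2
        = π ℓ k * (α ℓ) ^ 2 + π ℓ k * (ψ k) ^ 2 + 2 * (π ℓ k * α ℓ * ψ k)
          + π ℓ k * (κ ℓ k) ^ 2 + 2 * (π ℓ k * α ℓ * κ ℓ k)
          + 2 * (π ℓ k * ψ k * κ ℓ k) := by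
      intro ℓ k
      have : μ ℓ k - με = α ℓ + ψ k + κ ℓ k := by rw [hκ ℓ k]; ring
      rw [this]; ring
    calc ∑ ℓ, ∑ k, π ℓ k * (μ ℓ k - με) ^ 2
        = (∑ ℓ, ∑ k, π ℓ k * (α ℓ) ^ 2) + (∑ ℓ, ∑ k, π ℓ k * (ψ k) ^ 2)
          + 2 * (∑ ℓ, ∑ k, π ℓ k * α ℓ * ψ k)
          + (∑ ℓ, ∑ k, π ℓ k * (κ ℓ k) ^ 2)
          + 2 * (∑ ℓ, ∑ k, π ℓ k * α ℓ * κ ℓ k)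
          + 2 * (∑ ℓ, ∑ k, π ℓ k * ψ k * κ ℓ k) := by
          simp only [hterm, Finset.sum_add_distrib, Finset.mul_sum]
      _ = (∑ ℓ, (∑ k, π ℓ k) * (α ℓ) ^ 2)
          + (∑ k, (∑ ℓ, π ℓ k) * (ψ k) ^ 2)
          + 2 * (∑ ℓ, ∑ k, π ℓ k * α ℓ * ψ k)
          + (∑ ℓ, ∑ k, π ℓ k * (κ ℓ k) ^ 2) := by
          rw [horthα, horthψ]
          have e1 : ∑ ℓ, ∑ k, π ℓ k * (α ℓ) ^ 2 = ∑ ℓ, (∑ k, π ℓ k) * (α ℓ) ^ 2 := by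
            refine Finset.sum_congr rfl fun ℓ _ => ?_
            rw [Finset.sum_mul]
          have e2 : ∑ ℓ, ∑ k, π ℓ k * (ψ k) ^ 2 = ∑ k, (∑ ℓ, π ℓ k) * (ψ k) ^ 2 := by
            rw [Finset.sum_comm]
            refine Finset.sum_congr rfl fun k _ => ?_
            rw [Finset.sum_mul]
          rw [e1, e2]; ring
  -- put everything together
  have hcross2 : ∫ ω, 2 * ((f ω - με) * ξ ω) ∂P = 0 := by
    rw [integral_const_mul, hcross, mul_zero]
  rw [hvar, hsplit, hcross2, hfsq, hexp]
  ring
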